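/- Let q > 1, M > 0, N ≥ 2, and suppose w : (R,∞) → (0,∞) is C¹ and satisfies w'(r) ≥ M·r^((1−q)(N−1))·w(r)^q for all r > R, with w(r) → ℓ ∈ (0,∞] as r → ∞. If q > N/(N−1), then w(s) ≤ ((q−1)(N−1)−1)/((q−1)M))^(1/(q−1)) · s^(N−1−1/(q−1)) for all s > R. If 1 < q ≤ N/(N−1), no such w exists. -/

import Mathlib

open Filter Real

/-- Core comparison: if `P' ≤ r^(-α)` on `(R,∞)`, then
`(q-1)M (P T - P s) ≤ w s ^ (1-q) - w T ^ (1-q)`. -/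
private lemma stmt7_aux (R q M α : ℝ) (hq : 1 < q) (hM : 0 < M)
    (w w' : ℝ → ℝ)
    (hw : ∀ r : ℝ, R < r → HasDerivAt w (w' r) r)
    (hpos : ∀ r : ℝ, R < r → 0 < w r)
    (hineq : ∀ r : ℝ, R < r → M * r ^ (-α) * w r ^ q ≤ w' r)
    (P P' : ℝ → ℝ) (hP : ∀ r : ℝ, R < r → HasDerivAt P (P' r) r)
    (hP' : ∀ r : ℝ, R < r → P' r ≤ r ^ (-α))
    (s T : ℝ) (hs : R < s) (hsT : s ≤ T) :
    (q - 1) * M * (P T - P s) ≤ w s ^ (1 - q) - w T ^ (1 - q) := by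
  set g : ℝ → ℝ := fun r => w r ^ (1 - q) + (q - 1) * M * P r with hg
  have hg' : ∀ r, R < r → HasDerivAt g
      (w' r * (1 - q) * w r ^ (1 - q - 1) + (q - 1) * M * P' r) r := by
    intro r hr
    exact ((hw r hr).rpow_const (Or.inl (hpos r hr).ne')).add ((hP r hr).const_mul _)
  have key : ∀ r, R < r →
      w' r * (1 - q) * w r ^ (1 - q - 1) + (q - 1) * M * P' r ≤ 0 := by
    intro r hr
    have hwr := hpos r hr
    rw [show (1 : ℝ) - q - 1 = -q from by ring]
    have hc : (1 - q) * w r ^ (-q) ≤ 0 :=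
      mul_nonpos_of_nonpos_of_nonneg (by linarith) (Real.rpow_nonneg hwr.le _)
    have h1 : w' r * ((1 - q) * w r ^ (-q)) ≤
        M * r ^ (-α) * w r ^ q * ((1 - q) * w r ^ (-q)) :=
      mul_le_mul_of_nonpos_right (hineq r hr) hc
    have hone : w r ^ q * w r ^ (-q) = 1 := by
      rw [← Real.rpow_add hwr]; simp
    have h2 : M * r ^ (-α) * w r ^ q * ((1 - q) * w r ^ (-q)) = (1 - q) * (M * r ^ (-α)) := by
      calc M * r ^ (-α) * w r ^ q * ((1 - q) * w r ^ (-q))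
          = (1 - q) * (M * r ^ (-α)) * (w r ^ q * w r ^ (-q)) := by ring
        _ = (1 - q) * (M * r ^ (-α)) := by rw [hone, mul_one]
    rw [h2] at h1
    have h3 : (q - 1) * M * P' r ≤ (q - 1) * M * r ^ (-α) :=
      mul_le_mul_of_nonneg_left (hP' r hr) (by nlinarith)
    have h4 : w' r * (1 - q) * w r ^ (-q) = w' r * ((1 - q) * w r ^ (-q)) := by ring
    rw [h4]
    nlinarith [h1, h3]
  have hanti : AntitoneOn g (Set.Ioi R) := by
    apply antitoneOn_of_deriv_nonpos (convex_Ioi R)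
    · intro x hx
      exact (hg' x hx).differentiableAt.continuousAt.continuousWithinAt
    · rw [interior_Ioi]
      intro x hx
      exact (hg' x hx).differentiableAt.differentiableWithinAt
    · rw [interior_Ioi]
      intro x hx
      rw [(hg' x hx).deriv]
      exact key x hx
  have := hanti (Set.mem_Ioi.mpr hs) (Set.mem_Ioi.mpr (lt_of_lt_of_le hs hsT)) hsT
  simp only [hg] at this
  linarith

/-- ODE estimate for w'(r) ≥ M·r^((1−q)(N−1))·w(r)^q with w → ℓ ∈ (0,∞]:
upper bound for w when q > N/(N−1), nonexistence when 1 < q ≤ N/(N−1). -/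
theorem stmt7 (N q M R : ℝ) (hN : 2 ≤ N) (hq : 1 < q) (hM : 0 < M) (hR : 0 ≤ R)
    (w w' : ℝ → ℝ)
    (hw : ∀ r : ℝ, R < r → HasDerivAt w (w' r) r)
    (hpos : ∀ r : ℝ, R < r → 0 < w r)
    (hineq : ∀ r : ℝ, R < r → M * r ^ ((1 - q) * (N - 1)) * w r ^ q ≤ w' r)
    (hlim : Filter.Tendsto w Filter.atTop Filter.atTop ∨
      ∃ ℓ : ℝ, 0 < ℓ ∧ Filter.Tendsto w Filter.atTop (nhds ℓ)) :
    (N / (N - 1) < q → ∀ s : ℝ, R < s →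
      w s ≤ (((q - 1) * (N - 1) - 1) / ((q - 1) * M)) ^ (1 / (q - 1))
        * s ^ (N - 1 - 1 / (q - 1))) ∧
    (q ≤ N / (N - 1) → False) := by
  have hN1 : (0:ℝ) < N - 1 := by linarith
  have hq1 : (0:ℝ) < q - 1 := by linarith
  set α : ℝ := (q - 1) * (N - 1) with hαdef
  have hexp : (1 - q) * (N - 1) = -α := by rw [hαdef]; ring
  have hineq' : ∀ r : ℝ, R < r → M * r ^ (-α) * w r ^ q ≤ w' r := by
    intro r hr; rw [← hexp]; exact hineq r hr
  have hiff : N / (N - 1) < q ↔ 1 < α := by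
    rw [div_lt_iff₀ hN1, hαdef]
    constructor <;> intro h <;> nlinarith
  constructor
  · -- q > N/(N-1)
    intro hq2 s hs
    have hα : 1 < α := hiff.mp hq2
    set β : ℝ := α - 1 with hβdef
    have hβ : 0 < β := by rw [hβdef]; linarith
    have hspos : 0 < s := lt_of_le_of_lt hR hs
    -- primitive P r = -(r^(-β))/β  with  P' r = r^(-α)
    have hP : ∀ r : ℝ, R < r → HasDerivAt (fun x : ℝ => -(x ^ (-β)) / β) (r ^ (-α)) r := by
      intro r hr
      have hr0 : r ≠ 0 := (lt_of_le_of_lt hR hr).ne'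
      have h : HasDerivAt (fun x : ℝ => -(x ^ (-β)) / β) (-(-β * r ^ (-β - 1)) / β) r :=
        (Real.hasDerivAt_rpow_const (x := r) (p := -β) (Or.inl hr0)).neg.div_const β
      convert h using 1
      have heq : -β - 1 = -α := by rw [hβdef]; ring
      rw [heq]
      field_simp
    -- main inequality for all T ≥ s
    have hineqT : ∀ T : ℝ, s ≤ T →
        (q - 1) * M * ((-(T ^ (-β)) / β) - (-(s ^ (-β)) / β)) ≤ w s ^ (1 - q) := by
      intro T hT
      have h1 := stmt7_aux R q M α hq hM w w' hw hpos hineq'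
        (fun x : ℝ => -(x ^ (-β)) / β) (fun r => r ^ (-α)) hP
        (fun r _ => le_refl _) s T hs hT
      have h2 : 0 < w T ^ (1 - q) :=
        Real.rpow_pos_of_pos (hpos T (lt_of_lt_of_le hs hT)) _
      linarith
    -- let T → ∞
    have htend : Tendsto (fun T : ℝ => (q - 1) * M * ((-(T ^ (-β)) / β) - (-(s ^ (-β)) / β)))
        atTop (nhds ((q - 1) * M * ((-(0:ℝ) / β) - (-(s ^ (-β)) / β)))) := by
      exact (((tendsto_rpow_neg_atTop hβ).neg.div_const β).sub_const _).const_mul _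
    have hA : (q - 1) * M * ((-(0:ℝ) / β) - (-(s ^ (-β)) / β)) ≤ w s ^ (1 - q) :=
      le_of_tendsto htend ((eventually_ge_atTop s).mono fun T hT => hineqT T hT)
    have hA' : (q - 1) * M / β * s ^ (-β) ≤ w s ^ (1 - q) := by
      have : (q - 1) * M * ((-(0:ℝ) / β) - (-(s ^ (-β)) / β)) = (q - 1) * M / β * s ^ (-β) := by
        field_simp
        ring
      linarith [hA, this.symm.le]
    -- algebra to get the final bound
    have hC : 0 < (q - 1) * M / β := by positivity
    have hws : 0 < w s := hpos s hs
    have hbase : 0 < (q - 1) * M / β * s ^ (-β) := by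
      have := Real.rpow_pos_of_pos hspos (-β); positivity
    have hz : 1 / (1 - q) ≤ 0 := by
      apply div_nonpos_of_nonneg_of_nonpos <;> linarith
    have hstep := Real.rpow_le_rpow_of_nonpos hbase hA' hz
    have h1q : (1 : ℝ) - q ≠ 0 := by linarith
    have hq1' : q - 1 ≠ 0 := ne_of_gt hq1
    have hL : (w s ^ (1 - q)) ^ (1 / (1 - q)) = w s := by
      rw [← Real.rpow_mul hws.le, mul_one_div_cancel h1q, Real.rpow_one]
    have hR1 : ((q - 1) * M / β * s ^ (-β)) ^ (1 / (1 - q)) =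
        ((q - 1) * M / β) ^ (1 / (1 - q)) * (s ^ (-β)) ^ (1 / (1 - q)) :=
      Real.mul_rpow hC.le (Real.rpow_nonneg hspos.le _)
    have hR2 : (s ^ (-β)) ^ (1 / (1 - q)) = s ^ (N - 1 - 1 / (q - 1)) := by
      rw [← Real.rpow_mul hspos.le]
      congr 1
      rw [hβdef, hαdef]
      field_simp
      ring
    have hR3 : ((q - 1) * M / β) ^ (1 / (1 - q)) = (β / ((q - 1) * M)) ^ (1 / (q - 1)) := by
      have hinv : β / ((q - 1) * M) = ((q - 1) * M / β)⁻¹ := by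
        rw [inv_div]
      have hneg : (1 : ℝ) / (1 - q) = -(1 / (q - 1)) := by
        field_simp
        ring
      rw [hneg, Real.rpow_neg hC.le, hinv, Real.inv_rpow hC.le]
    calc w s = (w s ^ (1 - q)) ^ (1 / (1 - q)) := hL.symm
      _ ≤ ((q - 1) * M / β * s ^ (-β)) ^ (1 / (1 - q)) := hstep
      _ = ((q - 1) * M / β) ^ (1 / (1 - q)) * (s ^ (-β)) ^ (1 / (1 - q)) := hR1
      _ = (β / ((q - 1) * M)) ^ (1 / (q - 1)) * s ^ (N - 1 - 1 / (q - 1)) := by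
          rw [hR2, hR3]
  · -- 1 < q ≤ N/(N-1)
    intro hq2
    have hα : α ≤ 1 := by
      by_contra h
      exact absurd (hiff.mpr (lt_of_not_ge h)) (not_lt.mpr hq2)
    set R' : ℝ := max R 1 with hR'def
    have hRR' : R ≤ R' := le_max_left _ _
    have h1R' : (1:ℝ) ≤ R' := le_max_right _ _
    have hP : ∀ r : ℝ, R' < r → HasDerivAt Real.log r⁻¹ r := by
      intro r hr
      have h0 : (0 : ℝ) < r := by
        have := lt_of_le_of_lt h1R' hr; linarith
      exact Real.hasDerivAt_log h0.ne'
    have hP' : ∀ r : ℝ, R' < r → r⁻¹ ≤ r ^ (-α) := by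
      intro r hr
      have h1r : (1:ℝ) ≤ r := le_of_lt (lt_of_le_of_lt h1R' hr)
      rw [← Real.rpow_neg_one]
      exact Real.rpow_le_rpow_of_exponent_le h1r (by linarith)
    set s : ℝ := R' + 1 with hsdef
    have hs : R' < s := by rw [hsdef]; linarith
    have hsR : R < s := lt_of_le_of_lt hRR' hs
    have hineqT : ∀ T : ℝ, s ≤ T →
        (q - 1) * M * (Real.log T - Real.log s) ≤ w s ^ (1 - q) := by
      intro T hT
      have h1 := stmt7_aux R' q M α hq hM w w'
        (fun r hr => hw r (lt_of_le_of_lt hRR' hr))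
        (fun r hr => hpos r (lt_of_le_of_lt hRR' hr))
        (fun r hr => hineq' r (lt_of_le_of_lt hRR' hr))
        Real.log (fun r => r⁻¹) hP hP' s T hs hT
      have h2 : 0 < w T ^ (1 - q) :=
        Real.rpow_pos_of_pos (hpos T (lt_of_lt_of_le hsR hT)) _
      linarith
    have htend : Tendsto (fun T : ℝ => (q - 1) * M * (Real.log T - Real.log s)) atTop atTop := by
      apply Tendsto.const_mul_atTop (by positivity : (0:ℝ) < (q - 1) * M)
      have := tendsto_atTop_add_const_right Filter.atTop (-Real.log s) Real.tendsto_log_atTop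
      exact this.congr fun x => (sub_eq_add_neg _ _).symm
    obtain ⟨T, hT1, hT2⟩ := ((htend.eventually_gt_atTop (w s ^ (1 - q))).and
      (eventually_ge_atTop s)).exists
    exact absurd (hineqT T hT2) (not_le.mpr hT1)
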